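/- Let V = {1,…,m}, p ≥ 2, and let d_1,…,d_m be positive integers with maximum d and minimum at least d/θ for some θ ≥ 1. Suppose x ∈ ℝ^m satisfies Σ_i |x_i|^p d_i ≤ A for some A ≥ 1. Then for any γ > 0, the sum of max(|x_i|^{p-1}|x_j|, |x_i||x_j|^{p-1}) over all ordered pairs (i,j) ∈ V×V with max(|x_i|^{p-1}|x_j|, |x_i||x_j|^{p-1}) ≥ γ/(dm) is at most 2m·θ²·A²/(γ^{1/p}·d). -/

import Mathlib

open Finset

lemma holder_aux {n : ℕ} (hn : 0 < n) (b : Fin n → ℝ) (hb : ∀ i, 0 ≤ b i) {s : ℝ}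
    (hs0 : 0 < s) (hs1 : s ≤ 1) :
    ∑ i, b i ^ s ≤ (n : ℝ) ^ (1 - s) * (∑ i, b i) ^ s := by
  have hnR : (0:ℝ) < n := by exact_mod_cast hn
  have hs : (1:ℝ) ≤ 1/s := by rw [le_div_iff₀ hs0]; linarith
  have key := Real.rpow_arith_mean_le_arith_mean_rpow Finset.univ (fun _ : Fin n => 1/(n:ℝ))
    (fun i => b i ^ s) (fun i _ => by positivity)
    (by simp [Finset.sum_const, Finset.card_univ]; field_simp)
    (fun i _ => Real.rpow_nonneg (hb i) s) hs
  have hz : ∀ i : Fin n, (b i ^ s) ^ (1/s) = b i := by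
    intro i
    rw [← Real.rpow_mul (hb i), mul_one_div, div_self hs0.ne', Real.rpow_one]
  simp_rw [hz] at key
  -- key : (∑ i, 1/n * b i ^ s) ^ (1/s) ≤ ∑ i, 1/n * b i
  have hX : (0:ℝ) ≤ ∑ i, 1/(n:ℝ) * b i ^ s := Finset.sum_nonneg fun i _ => by have := Real.rpow_nonneg (hb i) s; positivity
  have key2 := Real.rpow_le_rpow (by positivity) key hs0.le
  rw [← Real.rpow_mul hX, one_div_mul_cancel hs0.ne', Real.rpow_one] at key2
  -- key2 : ∑ i, 1/n * b i ^ s ≤ (∑ i, 1/n * b i) ^ s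
  rw [← Finset.mul_sum, ← Finset.mul_sum] at key2
  have h3 : ((1/(n:ℝ)) * ∑ i, b i) ^ s = (1/(n:ℝ))^s * (∑ i, b i)^s :=
    Real.mul_rpow (by positivity) (Finset.sum_nonneg fun i _ => hb i)
  rw [h3] at key2
  have h4 : ∑ i, b i ^ s ≤ (n:ℝ) * ((1/(n:ℝ))^s * (∑ i, b i)^s) := by
    rw [← mul_le_mul_iff_right₀ (show (0:ℝ) < 1/(n:ℝ) by positivity)]
    calc 1/(n:ℝ) * ∑ i, b i ^ s ≤ (1/(n:ℝ))^s * (∑ i, b i)^s := key2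
    _ = 1/(n:ℝ) * ((n:ℝ) * ((1/(n:ℝ))^s * (∑ i, b i)^s)) := by
        field_simp
  calc ∑ i, b i ^ s ≤ (n:ℝ) * ((1/(n:ℝ))^s * (∑ i, b i)^s) := h4
    _ = (n:ℝ) ^ (1-s) * (∑ i, b i)^s := by
        rw [one_div, Real.inv_rpow hnR.le, Real.rpow_sub hnR, Real.rpow_one]
        field_simp
-- arithmetic endgame
lemma arith_aux (p θ A γ dR mR T : ℝ) (hp : 2 ≤ p) (hθ : 1 ≤ θ) (hA : 1 ≤ A) (hγ : 0 < γ)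
    (hd : 1 ≤ dR) (hm : 0 < mR) (hT0 : 0 ≤ T) (hT : T ≤ θ * A / dR) :
    (dR * mR / γ) ^ (1/p) *
      (2 * ((mR ^ (1 - (p-1)*(1+1/p)/p) * T ^ ((p-1)*(1+1/p)/p)) *
            (mR ^ (1 - (1+1/p)/p) * T ^ ((1+1/p)/p)))) ≤
      2 * mR * θ ^ 2 * A ^ 2 / (γ ^ (1/p) * dR) := by
  have hp0 : (0:ℝ) < p := by linarith
  have hdR : (0:ℝ) < dR := by linarith
  set r : ℝ := (p-1)*(1+1/p) with hr
  set q : ℝ := 1+1/p with hq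
  have hB : (0:ℝ) < θ * A / dR := by positivity
  have h1 : (dR * mR / γ) ^ (1/p) = dR ^ (1/p) * mR ^ (1/p) / γ ^ (1/p) := by
    rw [Real.div_rpow (by positivity) hγ.le, Real.mul_rpow hdR.le hm.le]
  have h2 : mR ^ ((1:ℝ)/p) * (mR ^ (1 - r/p) * mR ^ (1 - q/p)) = mR := by
    rw [← Real.rpow_add hm, ← Real.rpow_add hm]
    rw [show 1/p + (1 - r/p + (1 - q/p)) = 1 by rw [hr, hq]; field_simp; ring]
    exact Real.rpow_one _
  -- bound T powers by B powers
  have hrpos : (0:ℝ) < r := mul_pos (by linarith) (by positivity)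
  have hqpos : (0:ℝ) < q := by positivity
  have hTr : T ^ (r/p) ≤ (θ*A/dR) ^ (r/p) :=
    Real.rpow_le_rpow hT0 hT (div_nonneg hrpos.le hp0.le)
  have hTq : T ^ (q/p) ≤ (θ*A/dR) ^ (q/p) :=
    Real.rpow_le_rpow hT0 hT (div_nonneg hqpos.le hp0.le)
  have h3 : (θ*A/dR) ^ (r/p) * (θ*A/dR) ^ (q/p) = (θ*A/dR) ^ ((p+1)/p) := by
    rw [← Real.rpow_add hB]
    congr 1
    rw [hr, hq]; field_simp; ring
  have h4 : (θ*A/dR) ^ ((p+1)/p) = (θ*A) ^ ((p+1)/p) / dR ^ ((p+1)/p) :=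
    Real.div_rpow (by positivity) hdR.le _
  have h5 : (θ*A) ^ ((p+1)/p) ≤ θ^2 * A^2 := by
    have h51 : (θ*A) ^ ((p+1)/p) ≤ (θ*A) ^ (2:ℝ) := by
      apply Real.rpow_le_rpow_of_exponent_le (by nlinarith)
      rw [div_le_iff₀ hp0]; linarith
    calc (θ*A) ^ ((p+1)/p) ≤ (θ*A) ^ (2:ℝ) := h51
      _ = θ^2 * A^2 := by
          rw [show (2:ℝ) = ((2:ℕ):ℝ) by norm_num, Real.rpow_natCast]; ring
  have h6 : dR ^ ((1:ℝ)/p) / dR ^ ((p+1)/p) = 1/dR := by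
    rw [← Real.rpow_sub hdR]
    rw [show (1:ℝ)/p - (p+1)/p = -1 by field_simp; ring]
    rw [Real.rpow_neg_one]
    exact (one_div dR).symm
  -- now combine
  have hTr0 : 0 ≤ T ^ (r/p) := Real.rpow_nonneg hT0 _
  have hTq0 : 0 ≤ T ^ (q/p) := Real.rpow_nonneg hT0 _
  have hBr0 : 0 ≤ (θ*A/dR) ^ (r/p) := Real.rpow_nonneg hB.le _
  have hstep : T ^ (r/p) * T ^ (q/p) ≤ (θ*A) ^ ((p+1)/p) / dR ^ ((p+1)/p) := by
    calc T ^ (r/p) * T ^ (q/p) ≤ (θ*A/dR) ^ (r/p) * (θ*A/dR) ^ (q/p) :=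
          mul_le_mul hTr hTq hTq0 hBr0
      _ = (θ*A) ^ ((p+1)/p) / dR ^ ((p+1)/p) := by rw [h3, h4]
  -- LHS = (dR^(1/p) * mR / γ^(1/p)) * 2 * (T^(r/p) * T^(q/p))
  have hLHS : (dR * mR / γ) ^ (1/p) *
      (2 * ((mR ^ (1 - r/p) * T ^ (r/p)) * (mR ^ (1 - q/p) * T ^ (q/p)))) =
      2 * mR * dR ^ ((1:ℝ)/p) / γ ^ ((1:ℝ)/p) * (T ^ (r/p) * T ^ (q/p)) := by
    calc (dR * mR / γ) ^ (1/p) *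
        (2 * ((mR ^ (1 - r/p) * T ^ (r/p)) * (mR ^ (1 - q/p) * T ^ (q/p)))) =
        mR ^ ((1:ℝ)/p) * (mR ^ (1 - r/p) * mR ^ (1 - q/p)) *
          (2 * dR ^ ((1:ℝ)/p) / γ ^ ((1:ℝ)/p) * (T ^ (r/p) * T ^ (q/p))) := by
          rw [h1]; ring
      _ = mR * (2 * dR ^ ((1:ℝ)/p) / γ ^ ((1:ℝ)/p) * (T ^ (r/p) * T ^ (q/p))) := by rw [h2]
      _ = 2 * mR * dR ^ ((1:ℝ)/p) / γ ^ ((1:ℝ)/p) * (T ^ (r/p) * T ^ (q/p)) := by ring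
  rw [hLHS]
  have hc0 : (0:ℝ) ≤ 2 * mR * dR ^ ((1:ℝ)/p) / γ ^ ((1:ℝ)/p) := by positivity
  calc 2 * mR * dR ^ ((1:ℝ)/p) / γ ^ ((1:ℝ)/p) * (T ^ (r/p) * T ^ (q/p))
      ≤ 2 * mR * dR ^ ((1:ℝ)/p) / γ ^ ((1:ℝ)/p) *
        ((θ*A) ^ ((p+1)/p) / dR ^ ((p+1)/p)) := by
        apply mul_le_mul_of_nonneg_left hstep hc0
    _ = 2 * mR / γ ^ ((1:ℝ)/p) * (dR ^ ((1:ℝ)/p) / dR ^ ((p+1)/p)) * (θ*A) ^ ((p+1)/p) := by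
        ring
    _ = 2 * mR / γ ^ ((1:ℝ)/p) * (1/dR) * (θ*A) ^ ((p+1)/p) := by rw [h6]
    _ ≤ 2 * mR / γ ^ ((1:ℝ)/p) * (1/dR) * (θ^2 * A^2) := by
        apply mul_le_mul_of_nonneg_left h5 (by positivity)
    _ = 2 * mR * θ ^ 2 * A ^ 2 / (γ ^ (1/p) * dR) := by
        have hg : γ ^ ((1:ℝ)/p) ≠ 0 := by positivity
        have hdn : dR ≠ 0 := hdR.ne'
        field_simp

/-- Lemma on heavy pairs: if Σ_i |x_i|^p d_i ≤ A, then the sum of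
ovRe_p(x_i,x_j) = max(|x_i|^{p-1}|x_j|, |x_i||x_j|^{p-1}) over ordered pairs
with ovRe_p(x_i,x_j) ≥ γ/(dm) is at most 2m·θ²·A²/(γ^{1/p}·d). -/
theorem stmt11 (m : ℕ) (p θ A γ : ℝ) (hp : 2 ≤ p) (hθ : 1 ≤ θ) (hA : 1 ≤ A)
    (hγ : 0 < γ) (dvec : Fin m → ℕ) (d : ℕ)
    (hdpos : ∀ i, 0 < dvec i) (hdmax : ∀ i, dvec i ≤ d) (hdtop : ∃ i, dvec i = d)
    (hdmin : ∀ i, (d : ℝ) ≤ θ * (dvec i : ℝ))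
    (x : Fin m → ℝ) (hx : ∑ i, |x i| ^ p * (dvec i : ℝ) ≤ A) :
    ∑ ij ∈ Finset.univ.filter (fun ij : Fin m × Fin m =>
        γ / ((d : ℝ) * m) ≤ max (|x ij.1| ^ (p - 1) * |x ij.2|) (|x ij.1| * |x ij.2| ^ (p - 1))),
      max (|x ij.1| ^ (p - 1) * |x ij.2|) (|x ij.1| * |x ij.2| ^ (p - 1)) ≤
      2 * m * θ ^ 2 * A ^ 2 / (γ ^ (1 / p) * d) := by
  obtain ⟨i0, hi0⟩ := hdtop
  have hm : 0 < m := i0.pos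
  have hd : 0 < d := hi0 ▸ hdpos i0
  have hmR : (0:ℝ) < m := by exact_mod_cast hm
  have hdR : (0:ℝ) < d := by exact_mod_cast hd
  have hdR1 : (1:ℝ) ≤ d := by exact_mod_cast hd
  have hp0 : (0:ℝ) < p := by linarith
  set q : ℝ := 1 + 1/p with hq
  set r : ℝ := (p-1) * q with hr
  have hqpos : (0:ℝ) < q := by positivity
  have hrpos : (0:ℝ) < r := mul_pos (by linarith) hqpos
  set T : ℝ := ∑ i, |x i| ^ p with hTdef
  have hT0 : 0 ≤ T := Finset.sum_nonneg fun i _ => Real.rpow_nonneg (abs_nonneg _) _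
  have hT : T ≤ θ * A / d := by
    rw [le_div_iff₀ hdR]
    calc T * d = ∑ i, |x i| ^ p * (d:ℝ) := by rw [Finset.sum_mul]
      _ ≤ ∑ i, θ * (|x i| ^ p * (dvec i : ℝ)) := by
          apply Finset.sum_le_sum
          intro i _
          have h1 : (0:ℝ) ≤ |x i| ^ p := Real.rpow_nonneg (abs_nonneg _) _
          calc |x i| ^ p * (d:ℝ) ≤ |x i| ^ p * (θ * (dvec i : ℝ)) :=
                mul_le_mul_of_nonneg_left (hdmin i) h1
            _ = θ * (|x i| ^ p * (dvec i : ℝ)) := by ring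
      _ = θ * ∑ i, |x i| ^ p * (dvec i : ℝ) := by rw [Finset.mul_sum]
      _ ≤ θ * A := mul_le_mul_of_nonneg_left hx (by linarith)
  set K : ℝ := γ / ((d:ℝ) * m) with hKdef
  have hKpos : 0 < K := by positivity
  set C : ℝ := ((d:ℝ) * m / γ) ^ (1/p) with hCdef
  have hCpos : 0 < C := Real.rpow_pos_of_pos (by positivity) _
  have hCK : C * K ^ ((1:ℝ)/p) = 1 := by
    rw [hCdef, hKdef, ← Real.mul_rpow (by positivity) (by positivity)]
    rw [show (d:ℝ) * m / γ * (γ / ((d:ℝ)*m)) = 1 by field_simp]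
    exact Real.one_rpow _
  -- pointwise bound on heavy pairs
  have pointwise : ∀ ij ∈ Finset.univ.filter (fun ij : Fin m × Fin m =>
      γ / ((d : ℝ) * m) ≤ max (|x ij.1| ^ (p - 1) * |x ij.2|) (|x ij.1| * |x ij.2| ^ (p - 1))),
      max (|x ij.1| ^ (p - 1) * |x ij.2|) (|x ij.1| * |x ij.2| ^ (p - 1)) ≤
        C * (|x ij.1| ^ r * |x ij.2| ^ q + |x ij.1| ^ q * |x ij.2| ^ r) := by
    intro ij hij
    rw [Finset.mem_filter] at hij
    have h : K ≤ max (|x ij.1| ^ (p - 1) * |x ij.2|) (|x ij.1| * |x ij.2| ^ (p - 1)) := hij.2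
    set u : ℝ := |x ij.1| ^ (p - 1) * |x ij.2| with hu
    set v : ℝ := |x ij.1| * |x ij.2| ^ (p - 1) with hv
    have hov : 0 < max u v := lt_of_lt_of_le hKpos h
    have huq : u ^ q = |x ij.1| ^ r * |x ij.2| ^ q := by
      rw [hu, Real.mul_rpow (Real.rpow_nonneg (abs_nonneg _) _) (abs_nonneg _),
        ← Real.rpow_mul (abs_nonneg _), ← hr]
    have hvq : v ^ q = |x ij.1| ^ q * |x ij.2| ^ r := by
      rw [hv, Real.mul_rpow (abs_nonneg _) (Real.rpow_nonneg (abs_nonneg _) _),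
        ← Real.rpow_mul (abs_nonneg _), ← hr]
    have h2 : (max u v) ^ q ≤ |x ij.1| ^ r * |x ij.2| ^ q + |x ij.1| ^ q * |x ij.2| ^ r := by
      have hA1 : (0:ℝ) ≤ |x ij.1| ^ r * |x ij.2| ^ q :=
        mul_nonneg (Real.rpow_nonneg (abs_nonneg _) _) (Real.rpow_nonneg (abs_nonneg _) _)
      have hA2 : (0:ℝ) ≤ |x ij.1| ^ q * |x ij.2| ^ r :=
        mul_nonneg (Real.rpow_nonneg (abs_nonneg _) _) (Real.rpow_nonneg (abs_nonneg _) _)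
      rcases max_choice u v with hmc | hmc <;> rw [hmc]
      · rw [huq]; linarith
      · rw [hvq]; linarith
    have h1 : max u v ≤ C * (max u v) ^ q := by
      have e1 : (max u v) ^ q = max u v * (max u v) ^ ((1:ℝ)/p) := by
        rw [hq, Real.rpow_add hov, Real.rpow_one]
      have e2 : K ^ ((1:ℝ)/p) ≤ (max u v) ^ ((1:ℝ)/p) :=
        Real.rpow_le_rpow hKpos.le h (by positivity)
      calc max u v = (C * K ^ ((1:ℝ)/p)) * max u v := by rw [hCK, one_mul]
        _ ≤ (C * (max u v) ^ ((1:ℝ)/p)) * max u v := by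
            apply mul_le_mul_of_nonneg_right _ hov.le
            exact mul_le_mul_of_nonneg_left e2 hCpos.le
        _ = C * (max u v) ^ q := by rw [e1]; ring
    calc max u v ≤ C * (max u v) ^ q := h1
      _ ≤ C * (|x ij.1| ^ r * |x ij.2| ^ q + |x ij.1| ^ q * |x ij.2| ^ r) :=
          mul_le_mul_of_nonneg_left h2 hCpos.le
  set Sr : ℝ := ∑ i, |x i| ^ r with hSrdef
  set Sq : ℝ := ∑ i, |x i| ^ q with hSqdef
  have hprod : ∑ ij : Fin m × Fin m,
      (C * (|x ij.1| ^ r * |x ij.2| ^ q + |x ij.1| ^ q * |x ij.2| ^ r)) =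
      C * (Sr * Sq + Sq * Sr) := by
    rw [← Finset.mul_sum]
    congr 1
    rw [Fintype.sum_prod_type]
    have hinner : ∀ i : Fin m, ∑ j, (|x i| ^ r * |x j| ^ q + |x i| ^ q * |x j| ^ r)
        = |x i| ^ r * Sq + |x i| ^ q * Sr := by
      intro i
      rw [Finset.sum_add_distrib, ← Finset.mul_sum, ← Finset.mul_sum]
    simp_rw [hinner]
    rw [Finset.sum_add_distrib, ← Finset.sum_mul, ← Finset.sum_mul]
  -- Hölder bounds
  have hrewr : ∀ (e : ℝ) (i : Fin m), (|x i| ^ p) ^ (e/p) = |x i| ^ e := by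
    intro e i
    rw [← Real.rpow_mul (abs_nonneg _)]
    congr 1
    field_simp
  have hpinv : p * (1/p) = 1 := mul_one_div_cancel hp0.ne'
  have h1p : (1:ℝ)/p ≤ 1/2 := by
    rw [div_le_div_iff₀ hp0 (by norm_num)]; linarith
  have hsr0 : 0 < r/p := div_pos hrpos hp0
  have hsr1 : r/p ≤ 1 := by
    rw [div_le_one hp0, hr, hq]; nlinarith
  have hsq0 : 0 < q/p := div_pos hqpos hp0
  have hsq1 : q/p ≤ 1 := by
    rw [div_le_one hp0, hq]; linarith
  have hSr : Sr ≤ (m:ℝ) ^ (1 - r/p) * T ^ (r/p) := by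
    have h := holder_aux hm (fun i => |x i| ^ p)
      (fun i => Real.rpow_nonneg (abs_nonneg _) _) hsr0 hsr1
    simp_rw [hrewr r] at h
    exact h
  have hSq : Sq ≤ (m:ℝ) ^ (1 - q/p) * T ^ (q/p) := by
    have h := holder_aux hm (fun i => |x i| ^ p)
      (fun i => Real.rpow_nonneg (abs_nonneg _) _) hsq0 hsq1
    simp_rw [hrewr q] at h
    exact h
  have hSr0 : 0 ≤ Sr := Finset.sum_nonneg fun i _ => Real.rpow_nonneg (abs_nonneg _) _
  have hSq0 : 0 ≤ Sq := Finset.sum_nonneg fun i _ => Real.rpow_nonneg (abs_nonneg _) _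
  have hMT2 : 0 ≤ (m:ℝ) ^ (1 - q/p) * T ^ (q/p) :=
    mul_nonneg (Real.rpow_nonneg hmR.le _) (Real.rpow_nonneg hT0 _)
  calc ∑ ij ∈ Finset.univ.filter (fun ij : Fin m × Fin m =>
        γ / ((d : ℝ) * m) ≤ max (|x ij.1| ^ (p - 1) * |x ij.2|) (|x ij.1| * |x ij.2| ^ (p - 1))),
      max (|x ij.1| ^ (p - 1) * |x ij.2|) (|x ij.1| * |x ij.2| ^ (p - 1))
      ≤ ∑ ij ∈ Finset.univ.filter (fun ij : Fin m × Fin m =>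
        γ / ((d : ℝ) * m) ≤ max (|x ij.1| ^ (p - 1) * |x ij.2|) (|x ij.1| * |x ij.2| ^ (p - 1))),
        C * (|x ij.1| ^ r * |x ij.2| ^ q + |x ij.1| ^ q * |x ij.2| ^ r) :=
        Finset.sum_le_sum pointwise
    _ ≤ ∑ ij : Fin m × Fin m,
        C * (|x ij.1| ^ r * |x ij.2| ^ q + |x ij.1| ^ q * |x ij.2| ^ r) := by
        apply Finset.sum_le_sum_of_subset_of_nonneg (Finset.filter_subset _ _)
        intro ij _ _
        have h1 : (0:ℝ) ≤ |x ij.1| ^ r * |x ij.2| ^ q :=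
          mul_nonneg (Real.rpow_nonneg (abs_nonneg _) _) (Real.rpow_nonneg (abs_nonneg _) _)
        have h2 : (0:ℝ) ≤ |x ij.1| ^ q * |x ij.2| ^ r :=
          mul_nonneg (Real.rpow_nonneg (abs_nonneg _) _) (Real.rpow_nonneg (abs_nonneg _) _)
        exact mul_nonneg hCpos.le (by linarith)
    _ = C * (Sr * Sq + Sq * Sr) := hprod
    _ ≤ C * (2 * (((m:ℝ) ^ (1 - r/p) * T ^ (r/p)) * ((m:ℝ) ^ (1 - q/p) * T ^ (q/p)))) := by
        apply mul_le_mul_of_nonneg_left _ hCpos.le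
        have hmul := mul_le_mul hSr hSq hSq0 (mul_nonneg (Real.rpow_nonneg hmR.le _)
          (Real.rpow_nonneg hT0 _))
        nlinarith [hmul]
    _ ≤ 2 * m * θ ^ 2 * A ^ 2 / (γ ^ (1 / p) * d) := by
        have h := arith_aux p θ A γ (d:ℝ) (m:ℝ) T hp hθ hA hγ hdR1 hmR hT0 hT
        rw [hCdef, hr, hq]
        exact h
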